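/- arXiv:2305.16909 — 2 statements merged into one kernel-verified Lean document; each statement's English description precedes it below -/
import Mathlib

section
/- Let S ⊆ ℝⁿ be a nonempty convex set with homogenization homog(S) = cl(cone(S × {1})). Then the intersection of homog(S) with the hyperplane {(x, μ) : μ = 1}, projected onto the first n coordinates, equals the closure of S. -/
/-- The conical hull (including `0`) of a set. -/
def coneOf {E : Type*} [AddCommGroup E] [Module ℝ E] (A : Set E) : Set E :=
  {y | ∃ l : ℝ, 0 ≤ l ∧ ∃ a ∈ convexHull ℝ A, y = l • a}

/-- The homogenization of `S ⊆ ℝⁿ`, a subset of `ℝⁿ × ℝ ≅ ℝ^{n+1}`. -/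
def homog {n : ℕ} (S : Set (Fin n → ℝ)) : Set ((Fin n → ℝ) × ℝ) :=
  closure (coneOf ((fun x => (x, (1 : ℝ))) '' S))

theorem stmt_9 (n : ℕ) (S : Set (Fin n → ℝ)) (hne : S.Nonempty)
    (hconv : Convex ℝ S) :
    Prod.fst '' (homog S ∩ {p : (Fin n → ℝ) × ℝ | p.2 = 1}) = closure S := by
  have himg : (fun x => (x, (1 : ℝ))) '' S = S ×ˢ {(1 : ℝ)} := by
    ext p; simp [Set.mem_image, Prod.ext_iff, eq_comm, and_comm]
  have hCconv : Convex ℝ ((fun x => (x, (1 : ℝ))) '' S) := by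
    rw [himg]; exact hconv.prod (convex_singleton 1)
  have hhull : convexHull ℝ ((fun x => (x, (1 : ℝ))) '' S) = (fun x => (x, (1 : ℝ))) '' S :=
    hCconv.convexHull_eq
  ext x
  constructor
  · rintro ⟨p, ⟨hp, hp1⟩, rfl⟩
    rcases mem_closure_iff_seq_limit.1 hp with ⟨u, hu, hlim⟩
    have hsnd : Filter.Tendsto (fun k => (u k).2) Filter.atTop (nhds p.2) :=
      (continuous_snd.tendsto p).comp hlim
    rw [hp1] at hsnd
    have hfst : Filter.Tendsto (fun k => (u k).1) Filter.atTop (nhds p.1) :=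
      (continuous_fst.tendsto p).comp hlim
    have htend : Filter.Tendsto (fun k => ((u k).2)⁻¹ • (u k).1) Filter.atTop (nhds p.1) := by
      have := (hsnd.inv₀ one_ne_zero).smul hfst
      simpa using this
    apply mem_closure_of_tendsto htend
    have hpos : ∀ᶠ k in Filter.atTop, (0 : ℝ) < (u k).2 :=
      hsnd.eventually (eventually_gt_nhds one_pos)
    filter_upwards [hpos] with k hk
    rcases hu k with ⟨l, hl, a, ha, hla⟩
    rw [hhull] at ha
    rcases ha with ⟨s, hs, rfl⟩
    have h2 : (u k).2 = l := by rw [hla]; simp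
    have h1 : (u k).1 = l • s := by rw [hla]; simp [Prod.smul_def]
    rw [h1, h2, smul_smul, inv_mul_cancel₀ (by rw [h2] at hk; exact hk.ne'), one_smul]
    exact hs
  · intro hx
    refine ⟨(x, 1), ⟨?_, rfl⟩, rfl⟩
    have h1 : (x, (1 : ℝ)) ∈ closure ((fun x => (x, (1 : ℝ))) '' S) := by
      have : (x, (1:ℝ)) ∈ (fun x => (x, (1:ℝ))) '' closure S := ⟨x, hx, rfl⟩
      exact (image_closure_subset_closure_image (by fun_prop)) this
    refine closure_mono ?_ h1
    intro q hq
    exact ⟨1, zero_le_one, q, subset_convexHull ℝ _ hq, (one_smul ℝ q).symm⟩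
end

section
/- The set S = {x ∈ ℝ² : ∃ y ∈ ℝ², [[x₁ − y₁, 1],[1, x₂ − y₂]] ⪰ 0 and [[y₂, y₁],[y₁, 1]] ⪰ 0} equals the Minkowski sum E₁ + E₂, where E₁ = {(a,b) : a > 0, b ≥ 1/a} is the epigraph of x ↦ x⁻¹ on the positive reals and E₂ = {(a,b) : b ≥ a²} is the epigraph of x ↦ x². -/
open Pointwise

lemma psd2 (p q r : ℝ) :
    (!![p, q; q, r] : Matrix (Fin 2) (Fin 2) ℝ).PosSemidef ↔
      0 ≤ p ∧ 0 ≤ r ∧ q ^ 2 ≤ p * r := by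
  constructor
  · intro h
    have hp := h.dotProduct_mulVec_nonneg ![1, 0]
    have hr := h.dotProduct_mulVec_nonneg ![0, 1]
    simp [dotProduct, Matrix.mulVec, Fin.sum_univ_two] at hp hr
    refine ⟨hp, hr, ?_⟩
    by_contra hcon
    push_neg at hcon
    have hd := h.dotProduct_mulVec_nonneg ![q, -p]
    simp [dotProduct, Matrix.mulVec, Fin.sum_univ_two] at hd
    have hp0 : p = 0 := by nlinarith
    have hq0 : q ≠ 0 := by intro h0; rw [h0, hp0] at hcon; nlinarith
    have hb := h.dotProduct_mulVec_nonneg ![-(r + 1) / (2 * q), 1]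
    simp [dotProduct, Matrix.mulVec, Fin.sum_univ_two, hp0] at hb
    have hsimp : q * ((-1 + -r) / (2 * q)) = (-1 + -r) / 2 := by
      field_simp
    rw [hsimp] at hb
    linarith
  · rintro ⟨hp, hr, hq⟩
    refine Matrix.PosSemidef.of_dotProduct_mulVec_nonneg ?_ ?_
    · ext i j
      fin_cases i <;> fin_cases j <;>
        simp [Matrix.conjTranspose, Matrix.transpose, Matrix.vecHead, Matrix.vecTail]
    · intro x
      have hx : dotProduct (star x) ((!![p, q; q, r] : Matrix (Fin 2) (Fin 2) ℝ).mulVec x)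
          = p * (x 0)^2 + 2 * q * (x 0) * (x 1) + r * (x 1)^2 := by
        simp [dotProduct, Matrix.mulVec, Fin.sum_univ_two]
        ring
      rw [hx]
      rcases eq_or_lt_of_le hp with h0 | h0
      · have hq0 : q = 0 := by nlinarith
        rw [← h0, hq0]
        nlinarith [mul_nonneg hr (sq_nonneg (x 1))]
      · nlinarith [sq_nonneg (p * x 0 + q * x 1), sq_nonneg (x 1), mul_pos h0 h0]

theorem stmt_19 :
    {x : ℝ × ℝ | ∃ y : ℝ × ℝ,
        (!![x.1 - y.1, 1; 1, x.2 - y.2] : Matrix (Fin 2) (Fin 2) ℝ).PosSemidef ∧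
        (!![y.2, y.1; y.1, 1] : Matrix (Fin 2) (Fin 2) ℝ).PosSemidef} =
      {p : ℝ × ℝ | 0 < p.1 ∧ 1 / p.1 ≤ p.2} + {p : ℝ × ℝ | p.1 ^ 2 ≤ p.2} := by
  ext x
  simp only [Set.mem_setOf_eq, Set.mem_add, Prod.exists]
  constructor
  · rintro ⟨y1, y2, h1, h2⟩
    rw [psd2] at h1 h2
    obtain ⟨ha, hb, hc⟩ := h1
    obtain ⟨hd, he, hf⟩ := h2
    have hpos : 0 < x.1 - y1 := by nlinarith
    refine ⟨x.1 - y1, x.2 - y2, ⟨hpos, ?_⟩, y1, y2, by nlinarith, ?_⟩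
    · rw [div_le_iff₀ hpos]; nlinarith
    · ext <;> simp
  · rintro ⟨a, b, ⟨ha, hb⟩, c, d, hcd, hx⟩
    have hx1 : a + c = x.1 := congrArg Prod.fst hx
    have hx2 : b + d = x.2 := congrArg Prod.snd hx
    refine ⟨c, d, ?_, ?_⟩ <;> rw [psd2]
    · have e1 : x.1 - c = a := by linarith
      have e2 : x.2 - d = b := by linarith
      rw [e1, e2, div_le_iff₀ ha] at *
      exact ⟨ha.le, by nlinarith, by nlinarith⟩
    · exact ⟨by nlinarith, zero_le_one, by nlinarith⟩
end
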